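/- arXiv:2103.15643 — 11 statements merged into one kernel-verified Lean document; each statement's English description precedes it below -/
import Mathlib

section
/- Let Σ : E → E be defined by Σ(ξ) := e·σ(ξ) and Σ' : E → E by Σ'(ξ) := e·σ⁻¹(ξ) (σ and σ⁻¹ applied entrywise). Then Σ' is a two-sided inverse of Σ on E — i.e. for every ξ ∈ Aⁿ with e·ξ = ξ one has e·σ(e·σ⁻¹(ξ)) = ξ and e·σ⁻¹(e·σ(ξ)) = ξ — if and only if e·σ(e)·e = e and e·σ⁻¹(e)·e = e (where σ(e), σ⁻¹(e) denote entrywise application of σ, σ⁻¹ to the matrix e). -/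
/-- For an idempotent `e ∈ Mₙ(A)` and a ring automorphism `σ` of `A`,
the entrywise lift `Σ(ξ) = e·σ(ξ)` of `σ` to the right module `E = {ξ ∈ Aⁿ : e·ξ = ξ}`
has `Σ'(ξ) = e·σ⁻¹(ξ)` as a two-sided inverse on `E` if and only if
`e·σ(e)·e = e` and `e·σ⁻¹(e)·e = e`. -/
theorem lift_inverse_iff {A : Type*} [Ring A] (σ : A ≃+* A) (n : ℕ) (hn : 0 < n)
    (e : Matrix (Fin n) (Fin n) A) (he : e * e = e) :
    (∀ ξ : Fin n → A, e.mulVec ξ = ξ →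
        e.mulVec (fun i => σ ((e.mulVec (fun j => σ.symm (ξ j))) i)) = ξ ∧
        e.mulVec (fun i => σ.symm ((e.mulVec (fun j => σ (ξ j))) i)) = ξ)
      ↔ (e * e.map σ * e = e ∧ e * e.map σ.symm * e = e) := by
  have key : ∀ ξ : Fin n → A,
      (fun i => σ ((e.mulVec (fun j => σ.symm (ξ j))) i)) = (e.map (σ : A → A)).mulVec ξ := by
    intro ξ; funext i
    simp [Matrix.mulVec, dotProduct, map_sum, Matrix.map_apply]
  have key' : ∀ ξ : Fin n → A,
      (fun i => σ.symm ((e.mulVec (fun j => σ (ξ j))) i)) = (e.map (σ.symm : A → A)).mulVec ξ := by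
    intro ξ; funext i
    simp [Matrix.mulVec, dotProduct, map_sum, Matrix.map_apply]
  have col : ∀ (M : Matrix (Fin n) (Fin n) A) (k : Fin n),
      M.mulVec (fun j => e j k) = fun i => (M * e) i k := by
    intro M k; funext i
    simp [Matrix.mulVec, dotProduct, Matrix.mul_apply]
  constructor
  · intro h
    constructor <;>
    · ext i k
      have hξ : e.mulVec (fun j => e j k) = fun j => e j k := by
        rw [col, he]
      obtain ⟨h1, h2⟩ := h (fun j => e j k) hξ
      first
        | (rw [key, Matrix.mulVec_mulVec, col] at h1
           exact congrFun h1 i)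
        | (rw [key', Matrix.mulVec_mulVec, col] at h2
           exact congrFun h2 i)
  · rintro ⟨h1, h2⟩ ξ hξ
    constructor
    · rw [key, Matrix.mulVec_mulVec, ← hξ, Matrix.mulVec_mulVec, h1]
    · rw [key', Matrix.mulVec_mulVec, ← hξ, Matrix.mulVec_mulVec, h2]
end

section
/- The map σ'(b) := e·σ(b)·e maps B into B and is an automorphism of B: σ'(a·b) = σ'(a)·σ'(b) for all a, b ∈ B, and the map σ''(b) := e·σ⁻¹(b)·e is a two-sided inverse of σ' on B, i.e. σ'(σ''(b)) = b and σ''(σ'(b)) = b for every b ∈ B. -/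
lemma corner_mul_aux {R : Type*} [Ring R] (e f x y : R) (hee : e * e = e)
    (hff : f * f = f) (hfef : f * e * f = f) (hx : f * x * f = x) (hy : f * y * f = y) :
    e * (x * y) * e = (e * x * e) * (e * y * e) := by
  have hxy : x * y = x * e * y := by
    calc x * y = (f * x * f) * (f * y * f) := by rw [hx, hy]
    _ = f * x * (f * f) * (y * f) := by noncomm_ring
    _ = f * x * (f * e * f) * (y * f) := by rw [hff, hfef]
    _ = (f * x * f) * e * (f * y * f) := by noncomm_ring
    _ = x * e * y := by rw [hx, hy]
  rw [hxy]
  have h3 : (e * x * e) * (e * y * e) = e * x * (e * e) * y * e := by noncomm_ring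
  rw [h3, hee]
  noncomm_ring

lemma corner_inv_aux {R : Type*} [Ring R] (e g b : R) (hege : e * g * e = e)
    (hb : e * b * e = b) : e * (g * b * g) * e = b := by
  conv_lhs => rw [← hb]
  calc e * (g * (e * b * e) * g) * e = (e * g * e) * b * (e * g * e) := by noncomm_ring
  _ = e * b * e := by rw [hege]
  _ = b := hb

/-- `σ'(b) := e·σ(b)·e` maps the corner ring `B = {b : e·b·e = b}` into itself,
is multiplicative on `B`, and `σ''(b) := e·σ⁻¹(b)·e` is a two-sided inverse of `σ'` on `B`. -/
theorem lifted_automorphism_corner {A : Type*} [Ring A] (σ : A ≃+* A) (n : ℕ) (hn : 0 < n)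
    (e : Matrix (Fin n) (Fin n) A) (he : e * e = e)
    (h1 : e * e.map σ * e = e) (h2 : e * e.map σ.symm * e = e) :
    (∀ b : Matrix (Fin n) (Fin n) A, e * b * e = b →
        e * (e * b.map σ * e) * e = e * b.map σ * e) ∧
    (∀ a b : Matrix (Fin n) (Fin n) A, e * a * e = a → e * b * e = b →
        e * (a * b).map σ * e = (e * a.map σ * e) * (e * b.map σ * e)) ∧
    (∀ b : Matrix (Fin n) (Fin n) A, e * b * e = b →
        e * (e * b.map σ.symm * e).map σ * e = b ∧
        e * (e * b.map σ * e).map σ.symm * e = b) := by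
  set τ : Matrix (Fin n) (Fin n) A ≃+* Matrix (Fin n) (Fin n) A := σ.mapMatrix with hτdef
  have hτ : ∀ M : Matrix (Fin n) (Fin n) A, M.map σ = τ M := fun _ => rfl
  have hτ' : ∀ M : Matrix (Fin n) (Fin n) A, M.map σ.symm = τ.symm M := fun _ => rfl
  rw [hτ] at h1
  rw [hτ'] at h2
  have hgf : τ (τ.symm e) = e := τ.apply_symm_apply e
  have hfg : τ.symm (τ e) = e := τ.symm_apply_apply e
  have hff : τ e * τ e = τ e := by rw [← map_mul, he]
  have hgg : τ.symm e * τ.symm e = τ.symm e := by rw [← map_mul, he]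
  have hfef : τ e * e * τ e = τ e := by
    have := congrArg τ h2
    rwa [map_mul, map_mul, hgf] at this
  have hgeg : τ.symm e * e * τ.symm e = τ.symm e := by
    have := congrArg τ.symm h1
    rwa [map_mul, map_mul, hfg] at this
  refine ⟨?_, ?_, ?_⟩
  · intro b hb
    calc e * (e * b.map σ * e) * e = (e * e) * b.map σ * (e * e) := by noncomm_ring
    _ = e * b.map σ * e := by rw [he]
  · intro a b ha hb
    have ha' : τ e * τ a * τ e = τ a := by
      rw [← map_mul, ← map_mul]; exact congrArg τ ha
    have hb' : τ e * τ b * τ e = τ b := by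
      rw [← map_mul, ← map_mul]; exact congrArg τ hb
    rw [hτ, hτ, hτ, map_mul]
    exact corner_mul_aux e (τ e) (τ a) (τ b) he hff hfef ha' hb'
  · intro b hb
    constructor
    · rw [hτ', hτ, map_mul, map_mul, τ.apply_symm_apply b]
      exact corner_inv_aux e (τ e) b h1 hb
    · rw [hτ, hτ', map_mul, map_mul, τ.symm_apply_apply b]
      exact corner_inv_aux e (τ.symm e) b h2 hb
end

section
/- If σ moreover satisfies the regularity condition σ(a*) = (σ⁻¹(a))* for all a ∈ A and e is selfadjoint (e = e* for the conjugate transpose), then the automorphism σ'(b) := e·σ(b)·e of B is regular as well: σ'(b*) = (σ''(b))* for every b ∈ B, where σ''(b) := e·σ⁻¹(b)·e is the inverse of σ'. -/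
/-- if `σ` is regular (`σ(a*) = (σ⁻¹(a))*`) and `e` is a selfadjoint idempotent
satisfying `e·σ(e)·e = e` and `e·σ⁻¹(e)·e = e`, then the lifted automorphism
`σ'(b) = e·σ(b)·e` of the corner ring `B = {b : e·b·e = b}` is regular as well:
`σ'(b*) = (σ''(b))*` where `σ''(b) = e·σ⁻¹(b)·e`. -/
theorem lifted_automorphism_regular {A : Type*} [Ring A] [StarRing A] (σ : A ≃+* A)
    (hreg : ∀ a : A, σ (star a) = star (σ.symm a)) (n : ℕ) (hn : 0 < n)
    (e : Matrix (Fin n) (Fin n) A) (he : e * e = e) (hsa : e.conjTranspose = e)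
    (h1 : e * e.map σ * e = e) (h2 : e * e.map σ.symm * e = e) :
    ∀ b : Matrix (Fin n) (Fin n) A, e * b * e = b →
      e * (b.conjTranspose.map σ) * e = (e * b.map σ.symm * e).conjTranspose := by
  intro b _
  have key : b.conjTranspose.map σ = (b.map σ.symm).conjTranspose := by
    ext i j
    simp [Matrix.conjTranspose_apply, Matrix.map_apply, hreg]
  rw [key]
  simp [Matrix.conjTranspose_mul, hsa, mul_assoc]
end

section
/- Let D ∈ R, let (aⱼ, bⱼ, sbⱼ) for j = 1,…,n and (cᵢ, dᵢ, sdᵢ) for i = 1,…,m be families of elements of R satisfying, for all i, j: aⱼ·cᵢ = cᵢ·aⱼ, aⱼ·sdᵢ = sdᵢ·aⱼ, bⱼ·dᵢ = dᵢ·bⱼ, sbⱼ·sdᵢ = sdᵢ·sbⱼ, and cᵢ·sbⱼ = sbⱼ·cᵢ. Set ω₁ := Σⱼ aⱼ·(D·bⱼ − sbⱼ·D) and ω̂₁ := Σᵢ cᵢ·(D·dᵢ − sdᵢ·D). Then Σᵢⱼ cᵢ·((aⱼ·(D·bⱼ − sbⱼ·D))·dᵢ − sdᵢ·(aⱼ·(D·bⱼ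 − sbⱼ·D))) = Σⱼ aⱼ·(ω̂₁·bⱼ − sbⱼ·ω̂₁). (Interpretation: the non-linear term ω₂ := Σᵢ âᵢ[ω₁, b̂ᵢ]_{σ°} of a twisted inner fluctuation equals Σⱼ aⱼ[ω̂₁, bⱼ]_σ, where sbⱼ = σ(bⱼ), cᵢ = âᵢ, dᵢ = b̂ᵢ, sdᵢ = σ°(b̂ᵢ).) -/
lemma nonlinear_term_symmetry_key {R : Type*} [Ring R] (D c a b sb d sd : R)
    (h1 : a * c = c * a) (h2 : a * sd = sd * a) (h3 : b * d = d * b)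
    (h4 : sb * sd = sd * sb) (h5 : c * sb = sb * c) :
    c * ((a * (D * b - sb * D)) * d - sd * (a * (D * b - sb * D))) =
    a * ((c * (D * d - sd * D)) * b - sb * (c * (D * d - sd * D))) := by
  have A1 : ∀ x : R, a * (c * x) = c * (a * x) := fun x => by rw [← mul_assoc, h1, mul_assoc]
  have A2 : ∀ x : R, a * (sd * x) = sd * (a * x) := fun x => by rw [← mul_assoc, h2, mul_assoc]
  have A4 : ∀ x : R, sb * (sd * x) = sd * (sb * x) := fun x => by rw [← mul_assoc, h4, mul_assoc]
  have A5 : ∀ x : R, sb * (c * x) = c * (sb * x) := fun x => by rw [← mul_assoc, ← h5, mul_assoc]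
  simp only [mul_sub, sub_mul, mul_assoc, h3, A1, A2, A4, A5]
  abel

/-- under the listed commutation assumptions, the non-linear term
`ω₂ = Σᵢ cᵢ · [ω₁, dᵢ]_{sdᵢ}` (with `ω₁ = Σⱼ aⱼ·[D,bⱼ]_{sbⱼ}`) equals
`Σⱼ aⱼ · [ω̂₁, bⱼ]_{sbⱼ}` (with `ω̂₁ = Σᵢ cᵢ·[D,dᵢ]_{sdᵢ}`). -/
theorem nonlinear_term_symmetry {R : Type*} [Ring R] (D : R) (n m : ℕ)
    (a b sb : Fin n → R) (c d sd : Fin m → R)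
    (h1 : ∀ (i : Fin m) (j : Fin n), a j * c i = c i * a j)
    (h2 : ∀ (i : Fin m) (j : Fin n), a j * sd i = sd i * a j)
    (h3 : ∀ (i : Fin m) (j : Fin n), b j * d i = d i * b j)
    (h4 : ∀ (i : Fin m) (j : Fin n), sb j * sd i = sd i * sb j)
    (h5 : ∀ (i : Fin m) (j : Fin n), c i * sb j = sb j * c i) :
    ∑ i, ∑ j, c i * ((a j * (D * b j - sb j * D)) * d i
        - sd i * (a j * (D * b j - sb j * D))) =
      ∑ j, a j * ((∑ i, c i * (D * d i - sd i * D)) * b j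
        - sb j * (∑ i, c i * (D * d i - sd i * D))) := by
  rw [Finset.sum_comm]
  refine Finset.sum_congr rfl fun j _ => ?_
  rw [Finset.sum_mul, Finset.mul_sum, ← Finset.sum_sub_distrib, Finset.mul_sum]
  exact Finset.sum_congr rfl fun i _ =>
    nonlinear_term_symmetry_key D (c i) (a j) (b j) (sb j) (d i) (sd i)
      (h1 i j) (h2 i j) (h3 i j) (h4 i j) (h5 i j)
end

section
/- Let D, u', v', p, q, r, s be elements of R with p·q = 1 and r·s = 1. Then r·p·D·u'·v' = D + p·(D·u' − q·D) + r·(D·v' − s·D) + r·((p·(D·u' − q·D))·v' − s·(p·(D·u' − q·D))). (Interpretation: for a real twisted spectral triple not necessarily fulfilling the twisted first-order condition and a unitary u, with p = σ(u), q = σ(u*), u' = u*, r = σ°(û), s = σ°(û*), v' = û*, this is Ad(σ(u))·D·Ad(u)* = D + σ(u)[D,u*]_σ + σ°(û)[D,û*]_{σ°} + σ°(û)[σ(u)[D,u*]_σ, û*]_{σ°}.) -/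
/-- with `p·q = 1` and `r·s = 1`,
`r·p·D·u'·v' = D + p·[D,u']_q + r·[D,v']_s + r·[p·[D,u']_q , v']_s`
(the twisted conjugate action of `Ad(σ(u))` on `D`). -/
theorem twisted_Ad_action_on_D {R : Type*} [Ring R] (D u' v' p q r s : R)
    (hpq : p * q = 1) (hrs : r * s = 1) :
    r * p * D * u' * v' =
      D + p * (D * u' - q * D) + r * (D * v' - s * D) +
        r * ((p * (D * u' - q * D)) * v' - s * (p * (D * u' - q * D))) := by
  simp only [mul_sub, sub_mul, mul_add, ← mul_assoc, hpq, hrs, one_mul]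
  abel
end

section
/- Let u ∈ A be unitary (u*·u = u·u* = 1) and let a₁,…,aₙ, b₁,…,bₙ ∈ A. Set ω₁ := Σⱼ π(aⱼ)∘[D, π(bⱼ)]_σ, ω̂₁ := Σⱼ âⱼ∘[D, b̂ⱼ]_{σ°}, ω₂ := Σⱼ âⱼ∘[ω₁, b̂ⱼ]_{σ°} and D_ω := D + ω₁ + ω̂₁ + ω₂. Define the gauge-transformed family a'₀ := σ(u)·(1 − Σⱼ aⱼ·σ(bⱼ)), b'₀ := u*, and a'ⱼ := σ(u)·aⱼ, b'ⱼ := bⱼ·u* for 1 ≤ j ≤ n, and let D_{ωᵘ} be built from the family (a'ₖ, b'ₖ)ₖ₌₀,…,ₙ by the same three formulas. Then (π(σ(u)) ∘ (σ(u))^) ∘ D_ω ∘ (π(u*) ∘ (u*)^) = D_{ωᵘ}, where x^ denotes the hat of x ∈ A. -/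
/-- Conjugation `T ↦ J ∘ T ∘ J⁻¹` of a `ℂ`-linear endomorphism by a conjugate-linear
equivalence `J`; applied to `π(a)` it gives the "hat" `â = J∘π(a)∘J⁻¹`. -/
noncomputable def hatConj {V : Type*} [AddCommGroup V] [Module ℂ V]
    (J : V ≃ₗ⋆[ℂ] V) (T : Module.End ℂ V) : Module.End ℂ V where
  toFun x := J (T (J.symm x))
  map_add' x y := by simp
  map_smul' c x := by
    simp only [LinearEquiv.map_smulₛₗ, LinearMap.map_smulₛₗ, RingHom.id_apply,
      map_smulₛₗ, starRingEnd_self_apply]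

/-- The twisted-fluctuated Dirac operator
`D_ω = D + ω₁ + ω̂₁ + ω₂` with `ω₁ = Σⱼ π(aⱼ)[D,π(bⱼ)]_σ`,
`ω̂₁ = Σⱼ âⱼ[D,b̂ⱼ]_{σ°}` and `ω₂ = Σⱼ âⱼ[ω₁,b̂ⱼ]_{σ°}`, where
`[T,π(a)]_σ = T∘π(a) − π(σ(a))∘T` and `[T,â]_{σ°} = T∘â − (σ(a))^∘T`. -/
noncomputable def twistedFluct {V A : Type*} [AddCommGroup V] [Module ℂ V]
    [Ring A] [Algebra ℂ A] (J : V ≃ₗ⋆[ℂ] V) (π : A →ₐ[ℂ] Module.End ℂ V)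
    (σ : A ≃ₐ[ℂ] A) (D : Module.End ℂ V) {n : ℕ} (a b : Fin n → A) : Module.End ℂ V :=
  D + (∑ j, π (a j) * (D * π (b j) - π (σ (b j)) * D))
    + (∑ j, hatConj J (π (a j)) * (D * hatConj J (π (b j)) - hatConj J (π (σ (b j))) * D))
    + (∑ j, hatConj J (π (a j)) *
        ((∑ k, π (a k) * (D * π (b k) - π (σ (b k)) * D)) * hatConj J (π (b j))
          - hatConj J (π (σ (b j))) * (∑ k, π (a k) * (D * π (b k) - π (σ (b k)) * D))))

noncomputable def hatHom {V : Type*} [AddCommGroup V] [Module ℂ V]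
    (J : V ≃ₗ⋆[ℂ] V) : Module.End ℂ V →+* Module.End ℂ V where
  toFun := hatConj J
  map_one' := by ext x; simp [hatConj]
  map_mul' T S := by ext x; simp [hatConj, Module.End.mul_apply]
  map_zero' := by ext x; simp [hatConj]
  map_add' T S := by ext x; simp [hatConj]

private lemma swl {R : Type*} [Ring R] {x y : R} (h : x * y = y * x) (z : R) :
    x * (y * z) = y * (x * z) := by rw [← mul_assoc, h, mul_assoc]

private lemma contr {R : Type*} [Ring R] {x y : R} (h : x * y = 1) (z : R) :
    x * (y * z) = z := by rw [← mul_assoc, h, one_mul]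

lemma twoSwap {R : Type*} [Ring R] (p q r w d hc hd : R)
    (h1 : q * hc = hc * q) (h2 : hd * p = p * hd) (h3 : hd * r = r * hd) :
    (p * w * q + p * (d * q - r * d)) * hc - hd * (p * w * q + p * (d * q - r * d))
      = p * (w * hc - hd * w) * q + p * (d * hc - hd * d) * q
        - p * r * (d * hc - hd * d) := by
  simp only [sub_mul, mul_sub, add_mul, mul_add, mul_assoc, h1, swl h2, swl h3]
  try abel

lemma distrib3 {R : Type*} [Ring R] (p q r x A B : R)
    (c1 : x * p = p * x) (c2 : x * r = r * x) :
    x * (p * A * q + p * B * q - p * r * B)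
      = p * (x * A) * q + p * (x * B) * q - p * r * (x * B) := by
  simp only [mul_add, mul_sub, mul_assoc, swl c1, swl c2]
  try abel

lemma assembly {R : Type*} [Ring R] (p q r h k m Dd w wh v : R)
    (hpr : p * r = 1) (hhm : h * m = 1)
    (chp : h * p = p * h) (chr : h * r = r * h) (ckq : k * q = q * k) :
    (p * h) * (Dd + w + wh + v) * (q * k)
      = Dd + (p * w * q + p * (Dd * q - r * Dd))
        + (h * wh * k + h * (Dd * k - m * Dd))
        + (h * (p * v * q + p * wh * q - p * r * wh) * k
           + h * (p * (w * k - m * w) * q + p * (Dd * k - m * Dd) * q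
              - p * r * (Dd * k - m * Dd))) := by
  simp only [mul_add, add_mul, mul_sub, sub_mul, mul_assoc, swl chp, swl chr, ckq,
    contr hpr, contr hhm, hpr, hhm, mul_one, one_mul]
  try abel

lemma oneFormGauge {A R : Type*} [Ring A] [Ring R] (Q : A → R) (σf : A → A)
    (Qmul : ∀ x y, Q (x * y) = Q x * Q y) (Qone : Q 1 = 1)
    (Qsub : ∀ x y, Q (x - y) = Q x - Q y)
    (Qsum : ∀ {m : ℕ} (g : Fin m → A), Q (∑ j, g j) = ∑ j, Q (g j))
    (σmul : ∀ x y, σf (x * y) = σf x * σf y)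
    (X : R) (s t : A) {n : ℕ} (a b : Fin n → A) :
    (∑ k, Q ((Fin.cons (s * (1 - ∑ j, a j * σf (b j))) (fun j => s * a j) : Fin (n+1) → A) k) *
        (X * Q ((Fin.cons t (fun j => b j * t) : Fin (n+1) → A) k)
          - Q (σf ((Fin.cons t (fun j => b j * t) : Fin (n+1) → A) k)) * X))
      = Q s * (∑ j, Q (a j) * (X * Q (b j) - Q (σf (b j)) * X)) * Q t
        + Q s * (X * Q t - Q (σf t) * X) := by
  rw [Fin.sum_univ_succ]
  simp only [Fin.cons_zero, Fin.cons_succ, σmul, Qmul, Qsub, Qone, Qsum]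
  have e : ∀ j : Fin n,
      Q s * Q (a j) * (X * (Q (b j) * Q t) - Q (σf (b j)) * Q (σf t) * X)
        = Q s * (Q (a j) * (X * Q (b j) - Q (σf (b j)) * X)) * Q t
          + Q s * (Q (a j) * Q (σf (b j))) * (X * Q t - Q (σf t) * X) := by
    intro j; noncomm_ring
  rw [Finset.sum_congr rfl fun j _ => e j, Finset.sum_add_distrib, mul_one_sub, sub_mul,
    Finset.mul_sum, Finset.sum_mul, Finset.mul_sum, Finset.sum_mul]
  abel

/-- for a unitary `u`, the twisted conjugate action
`(π(σ(u))∘(σ(u))^) ∘ D_ω ∘ (π(u*)∘(u*)^)` of `Ad(u)` on the twisted-fluctuated operator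
`D_ω` equals the operator `D_{ωᵘ}` built by the same formulas from the gauge-transformed
family `a'₀ = σ(u)(1 − Σⱼ aⱼσ(bⱼ))`, `b'₀ = u*`, `a'ⱼ = σ(u)aⱼ`, `b'ⱼ = bⱼu*`. -/
theorem gauge_transform_eq_twisted_Ad {V A : Type*} [AddCommGroup V] [Module ℂ V]
    [Ring A] [Algebra ℂ A] [StarRing A]
    (π : A →ₐ[ℂ] Module.End ℂ V) (J : V ≃ₗ⋆[ℂ] V)
    (ε : ℂ) (hε : ε = 1 ∨ ε = -1) (hJJ : ∀ v : V, J (J v) = ε • v)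
    (σ : A ≃ₐ[ℂ] A) (hreg : ∀ a : A, σ (star a) = star (σ.symm a))
    (hzero : ∀ a b : A, π a * hatConj J (π b) = hatConj J (π b) * π a)
    (D : Module.End ℂ V) (ε' : ℂ) (hε' : ε' = 1 ∨ ε' = -1)
    (hJD : ∀ v : V, J (D v) = ε' • D (J v))
    (u : A) (hu1 : star u * u = 1) (hu2 : u * star u = 1)
    (n : ℕ) (a b : Fin n → A) :
    (π (σ u) * hatConj J (π (σ u))) * twistedFluct J π σ D a b *
        (π (star u) * hatConj J (π (star u))) =
      twistedFluct J π σ D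
        (Fin.cons (σ u * (1 - ∑ j, a j * σ (b j))) (fun j => σ u * a j))
        (Fin.cons (star u) (fun j => b j * star u)) := by
  have Hmul : ∀ x y : A, hatConj J (π (x * y)) = hatConj J (π x) * hatConj J (π y) := by
    intro x y; rw [map_mul]; exact map_mul (hatHom J) _ _
  have Hone : hatConj J (π (1 : A)) = 1 := by rw [map_one]; exact map_one (hatHom J)
  have Hsub : ∀ x y : A, hatConj J (π (x - y)) = hatConj J (π x) - hatConj J (π y) := by
    intro x y; rw [map_sub]; exact map_sub (hatHom J) _ _
  have Hsum : ∀ {m : ℕ} (g : Fin m → A),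
      hatConj J (π (∑ j, g j)) = ∑ j, hatConj J (π (g j)) := by
    intro m g; rw [map_sum]; exact map_sum (hatHom J) _ _
  have σmul : ∀ x y : A, σ (x * y) = σ x * σ y := map_mul σ
  have hpr : π (σ u) * π (σ (star u)) = 1 := by
    rw [← map_mul, ← map_mul, hu2, map_one, map_one]
  have hhm : hatConj J (π (σ u)) * hatConj J (π (σ (star u))) = 1 := by
    rw [← Hmul, ← map_mul, hu2, map_one, Hone]
  unfold twistedFluct
  set w : Module.End ℂ V := ∑ j, π (a j) * (D * π (b j) - π (σ (b j)) * D) with hw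
  set wh : Module.End ℂ V :=
    ∑ j, hatConj J (π (a j)) * (D * hatConj J (π (b j)) - hatConj J (π (σ (b j))) * D) with hwh
  set v : Module.End ℂ V :=
    ∑ j, hatConj J (π (a j)) * (w * hatConj J (π (b j)) - hatConj J (π (σ (b j))) * w) with hv
  set w' : Module.End ℂ V :=
    ∑ k, π ((Fin.cons (σ u * (1 - ∑ j, a j * σ (b j))) (fun j => σ u * a j) : Fin (n+1) → A) k) *
      (D * π ((Fin.cons (star u) (fun j => b j * star u) : Fin (n+1) → A) k)
        - π (σ ((Fin.cons (star u) (fun j => b j * star u) : Fin (n+1) → A) k)) * D) with hw'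
  have f1 : w' = π (σ u) * w * π (star u)
      + π (σ u) * (D * π (star u) - π (σ (star u)) * D) := by
    rw [hw', hw]
    exact oneFormGauge (⇑π) (⇑σ) (map_mul π) (map_one π) (map_sub π)
      (fun g => map_sum π g Finset.univ) σmul D (σ u) (star u) a b
  have f2 : (∑ j, hatConj J (π ((Fin.cons (σ u * (1 - ∑ j, a j * σ (b j)))
          (fun j => σ u * a j) : Fin (n+1) → A) j)) *
        (D * hatConj J (π ((Fin.cons (star u) (fun j => b j * star u) : Fin (n+1) → A) j))
          - hatConj J (π (σ ((Fin.cons (star u) (fun j => b j * star u) : Fin (n+1) → A) j))) * D))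
      = hatConj J (π (σ u)) * wh * hatConj J (π (star u))
        + hatConj J (π (σ u)) * (D * hatConj J (π (star u))
            - hatConj J (π (σ (star u))) * D) := by
    rw [hwh]
    exact oneFormGauge (fun x => hatConj J (π x)) (⇑σ) Hmul Hone Hsub
      (fun g => Hsum g) σmul D (σ u) (star u) a b
  have f4 : (∑ j, hatConj J (π ((Fin.cons (σ u * (1 - ∑ j, a j * σ (b j)))
          (fun j => σ u * a j) : Fin (n+1) → A) j)) *
        (w' * hatConj J (π ((Fin.cons (star u) (fun j => b j * star u) : Fin (n+1) → A) j))
          - hatConj J (π (σ ((Fin.cons (star u) (fun j => b j * star u) : Fin (n+1) → A) j))) * w'))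
      = hatConj J (π (σ u)) *
          (∑ j, hatConj J (π (a j)) * (w' * hatConj J (π (b j))
            - hatConj J (π (σ (b j))) * w')) * hatConj J (π (star u))
        + hatConj J (π (σ u)) * (w' * hatConj J (π (star u))
            - hatConj J (π (σ (star u))) * w') :=
    oneFormGauge (fun x => hatConj J (π x)) (⇑σ) Hmul Hone Hsub
      (fun g => Hsum g) σmul w' (σ u) (star u) a b
  have f5 : (∑ j, hatConj J (π (a j)) * (w' * hatConj J (π (b j))
        - hatConj J (π (σ (b j))) * w'))
      = π (σ u) * v * π (star u) + π (σ u) * wh * π (star u)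
        - π (σ u) * π (σ (star u)) * wh := by
    have e : ∀ j : Fin n,
        hatConj J (π (a j)) * (w' * hatConj J (π (b j)) - hatConj J (π (σ (b j))) * w')
          = π (σ u) * (hatConj J (π (a j)) *
                (w * hatConj J (π (b j)) - hatConj J (π (σ (b j))) * w)) * π (star u)
            + π (σ u) * (hatConj J (π (a j)) *
                (D * hatConj J (π (b j)) - hatConj J (π (σ (b j))) * D)) * π (star u)
            - π (σ u) * π (σ (star u)) * (hatConj J (π (a j)) *
                (D * hatConj J (π (b j)) - hatConj J (π (σ (b j))) * D)) := by
      intro j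
      rw [f1, twoSwap _ _ _ _ _ _ _ (hzero _ _) (hzero _ _).symm (hzero _ _).symm,
        distrib3 _ _ _ _ _ _ (hzero _ _).symm (hzero _ _).symm]
    rw [Finset.sum_congr rfl fun j _ => e j, Finset.sum_sub_distrib, Finset.sum_add_distrib,
      ← Finset.sum_mul, ← Finset.mul_sum, ← Finset.sum_mul, ← Finset.mul_sum,
      ← Finset.mul_sum, ← hv, ← hwh]
  have f6 : w' * hatConj J (π (star u)) - hatConj J (π (σ (star u))) * w'
      = π (σ u) * (w * hatConj J (π (star u)) - hatConj J (π (σ (star u))) * w) * π (star u)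
        + π (σ u) * (D * hatConj J (π (star u)) - hatConj J (π (σ (star u))) * D) * π (star u)
        - π (σ u) * π (σ (star u)) *
            (D * hatConj J (π (star u)) - hatConj J (π (σ (star u))) * D) := by
    rw [f1]
    exact twoSwap _ _ _ _ _ _ _ (hzero _ _) (hzero _ _).symm (hzero _ _).symm
  rw [f4, f5, f6, f1, f2]
  exact assembly (π (σ u)) (π (star u)) (π (σ (star u))) (hatConj J (π (σ u)))
    (hatConj J (π (star u))) (hatConj J (π (σ (star u)))) D w wh v hpr hhm
    (hzero _ _).symm (hzero _ _).symm (hzero _ _).symm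
end

section
/- Let T : V → V be any ℂ-linear map with J∘T = ε'·(T∘J), and let a ∈ A. Define γ := (σ(a))^ ∘ (T∘π(a) − π(σ(a))∘T). Then T∘(π(a)∘â) − (π(σ(a))∘(σ(a))^)∘T = γ + ε'·J∘γ∘J⁻¹ + ([T, π(a)]_σ∘â − (σ(a))^∘[T, π(a)]_σ). Consequently the twisted commutator of T with π(a)∘â (twisted by π(σ(a))∘(σ(a))^) vanishes if and only if γ + ε'·J∘γ∘J⁻¹ + [[T, π(a)]_σ, â]_{σ°} = 0. (Interpretation: with a = 𝔲 := σ(u)*·u for a unitary u and T = D_ω, this is the criterion for selfadjointness of the gauge-transformed twisted-fluctuated Dirac operator.) -/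
lemma hatConj_mul {V : Type*} [AddCommGroup V] [Module ℂ V]
    (J : V ≃ₗ⋆[ℂ] V) (S T : Module.End ℂ V) :
    hatConj J (S * T) = hatConj J S * hatConj J T := by
  ext v
  simp [hatConj, Module.End.mul_apply]

lemma hatConj_sub {V : Type*} [AddCommGroup V] [Module ℂ V]
    (J : V ≃ₗ⋆[ℂ] V) (S T : Module.End ℂ V) :
    hatConj J (S - T) = hatConj J S - hatConj J T := by
  ext v
  simp [hatConj]

lemma hatConj_hatConj {V : Type*} [AddCommGroup V] [Module ℂ V]
    (J : V ≃ₗ⋆[ℂ] V) (ε : ℂ) (hε : ε = 1 ∨ ε = -1) (hJJ : ∀ v : V, J (J v) = ε • v)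
    (S : Module.End ℂ V) : hatConj J (hatConj J S) = S := by
  have hsymm : ∀ v : V, J.symm (J.symm v) = ε • v := by
    intro v
    apply_fun J
    · apply_fun J
      · rw [J.apply_symm_apply, hJJ]
        rcases hε with h | h <;> simp [h]
      · exact J.injective
    · exact J.injective
  ext v
  simp only [hatConj, LinearMap.coe_mk, AddHom.coe_mk, hsymm]
  rw [map_smul, hJJ]
  rcases hε with h | h <;> simp [h, smul_smul]

/-- with `γ := (σ(a))^ ∘ [T,π(a)]_σ`, one has
`[T, π(a)∘â]_{π(σ(a))∘(σ(a))^} = γ + ε'·J∘γ∘J⁻¹ + [[T,π(a)]_σ, â]_{σ°}`, and consequently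
the left-hand side vanishes iff the right-hand side does (criterion for selfadjointness of
the gauge-transformed twisted-fluctuated Dirac operator). -/
theorem selfadjointness_criterion {V A : Type*} [AddCommGroup V] [Module ℂ V]
    [Ring A] [Algebra ℂ A] [StarRing A]
    (π : A →ₐ[ℂ] Module.End ℂ V) (J : V ≃ₗ⋆[ℂ] V)
    (ε : ℂ) (hε : ε = 1 ∨ ε = -1) (hJJ : ∀ v : V, J (J v) = ε • v)
    (σ : A ≃ₐ[ℂ] A) (hreg : ∀ a : A, σ (star a) = star (σ.symm a))
    (hzero : ∀ a b : A, π a * hatConj J (π b) = hatConj J (π b) * π a)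
    (ε' : ℂ) (hε' : ε' = 1 ∨ ε' = -1)
    (T : Module.End ℂ V) (hJT : ∀ v : V, J (T v) = ε' • T (J v)) (a : A) :
    (T * (π a * hatConj J (π a)) - (π (σ a) * hatConj J (π (σ a))) * T =
      hatConj J (π (σ a)) * (T * π a - π (σ a) * T)
        + ε' • hatConj J (hatConj J (π (σ a)) * (T * π a - π (σ a) * T))
        + ((T * π a - π (σ a) * T) * hatConj J (π a)
            - hatConj J (π (σ a)) * (T * π a - π (σ a) * T))) ∧
    ((T * (π a * hatConj J (π a)) - (π (σ a) * hatConj J (π (σ a))) * T = 0) ↔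
      hatConj J (π (σ a)) * (T * π a - π (σ a) * T)
        + ε' • hatConj J (hatConj J (π (σ a)) * (T * π a - π (σ a) * T))
        + ((T * π a - π (σ a) * T) * hatConj J (π a)
            - hatConj J (π (σ a)) * (T * π a - π (σ a) * T)) = 0) := by
  have hT : hatConj J T = ε' • T := by
    ext v
    show J (T (J.symm v)) = ε' • T v
    rw [hJT, J.apply_symm_apply]
  have key : T * (π a * hatConj J (π a)) - (π (σ a) * hatConj J (π (σ a))) * T =
      hatConj J (π (σ a)) * (T * π a - π (σ a) * T)
        + ε' • hatConj J (hatConj J (π (σ a)) * (T * π a - π (σ a) * T))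
        + ((T * π a - π (σ a) * T) * hatConj J (π a)
            - hatConj J (π (σ a)) * (T * π a - π (σ a) * T)) := by
    rw [hatConj_mul, hatConj_sub, hatConj_mul, hatConj_mul,
      hatConj_hatConj J ε hε hJJ, hT]
    rcases hε' with h | h <;> simp [h, neg_smul] <;> noncomm_ring
  exact ⟨key, by rw [key]⟩
end

section
/- Let a₁,…,aₙ, b₁,…,bₙ ∈ A be a twisted normalised family, i.e. Σⱼ aⱼ·σ(bⱼ) = 1. Then the family (bⱼ*, aⱼ*)ⱼ is also twisted normalised, Σⱼ bⱼ*·σ(aⱼ*) = 1, and the adjoint of the associated twisted one-form is (Σⱼ π(aⱼ)·(D·π(bⱼ) − π(σ(bⱼ))·D))* = Σⱼ π(bⱼ*)·(D·π(aⱼ*) − π(σ(aⱼ*))·D). -/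
/-- if `(aⱼ,bⱼ)` is twisted normalised then so is `(bⱼ*, aⱼ*)`, and the
adjoint of the associated twisted one-form is the twisted one-form of `(bⱼ*, aⱼ*)`. -/
theorem eta_adjoint {A R : Type*} [Ring A] [StarRing A] [Ring R] [StarRing R]
    (σ : A ≃+* A) (hreg : ∀ a : A, σ (star a) = star (σ.symm a))
    (π : A →+* R) (hπ : ∀ a : A, π (star a) = star (π a))
    (D : R) (hD : star D = D)
    (n : ℕ) (a b : Fin n → A) (hnorm : (∑ j, a j * σ (b j)) = 1) :
    (∑ j, star (b j) * σ (star (a j))) = 1 ∧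
    star (∑ j, π (a j) * (D * π (b j) - π (σ (b j)) * D)) =
      ∑ j, π (star (b j)) * (D * π (star (a j)) - π (σ (star (a j))) * D) := by
  have h1 : (∑ j, σ.symm (a j) * b j) = 1 := by
    have h := congrArg σ.symm hnorm
    simpa [map_sum, map_mul] using h
  have hpart1 : (∑ j, star (b j) * σ (star (a j))) = 1 := by
    have h := congrArg star h1
    simp only [star_sum, star_mul, star_one] at h
    simpa [hreg] using h
  refine ⟨hpart1, ?_⟩
  have hsb : ∀ j, star (σ (b j)) = σ.symm (star (b j)) := fun j => by
    have h := hreg (star (b j)); rw [star_star] at h; rw [h, star_star]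
  have key1 : (∑ j, D * (π (star (σ (b j))) * π (star (a j)))) = D := by
    rw [← Finset.mul_sum]
    have h : (∑ j, star (σ (b j)) * star (a j)) = 1 := by
      simp_rw [← star_mul]
      rw [← star_sum, hnorm, star_one]
    simp_rw [← map_mul, ← map_sum, h, map_one, mul_one]
  have key2 : (∑ j, π (star (b j)) * π (σ (star (a j))) * D) = D := by
    rw [← Finset.sum_mul]
    simp_rw [← map_mul, ← map_sum, hpart1, map_one, one_mul]
  have expandL : star (∑ j, π (a j) * (D * π (b j) - π (σ (b j)) * D))
      = (∑ j, π (star (b j)) * D * π (star (a j)))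
        - ∑ j, D * (π (star (σ (b j))) * π (star (a j))) := by
    rw [star_sum, ← Finset.sum_sub_distrib]
    refine Finset.sum_congr rfl fun j _ => ?_
    rw [star_mul, star_sub, star_mul, star_mul, hD, ← hπ, ← hπ, ← hπ]
    noncomm_ring
  have expandR : (∑ j, π (star (b j)) * (D * π (star (a j)) - π (σ (star (a j))) * D))
      = (∑ j, π (star (b j)) * D * π (star (a j)))
        - ∑ j, π (star (b j)) * π (σ (star (a j))) * D := by
    rw [← Finset.sum_sub_distrib]
    refine Finset.sum_congr rfl fun j _ => ?_
    noncomm_ring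
  rw [expandL, expandR, key1, key2]
end

section
/- Let D ∈ R and let (aⱼ, bⱼ, sbⱼ) for j = 1,…,n and (cᵢ, dᵢ, sdᵢ) for i = 1,…,m be families in R satisfying the two normalisation conditions Σⱼ aⱼ·sbⱼ = 1 and Σᵢ cᵢ·sdᵢ = 1. Then Σᵢⱼ aⱼ·cᵢ·D·dᵢ·bⱼ = D + Σⱼ aⱼ·(D·bⱼ − sbⱼ·D) + Σᵢ cᵢ·(D·dᵢ − sdᵢ·D) + Σⱼ aⱼ·(Ω̂·bⱼ − sbⱼ·Ω̂), where Ω̂ := Σᵢ cᵢ·(D·dᵢ − sdᵢ·D). (Interpretation: with cᵢ = âᵢ, dᵢ = b̂ᵢ, sbⱼ = σ(bⱼ), sdᵢ = σ°(b̂ᵢ), the action (μ(A), D) of the image of a twisted normalised element A under the homomorphism μ(A) = A ⊗ Â on the Dirac operator D equals the twisted fluctuation D_ω = D + ω₁ + ω̂₁ + ω₂ with ω = η(A).) -/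
/-- for normalised families `Σⱼ aⱼ·sbⱼ = 1` and `Σᵢ cᵢ·sdᵢ = 1`, the action
`Σᵢⱼ aⱼ·cᵢ·D·dᵢ·bⱼ` equals the twisted fluctuation
`D + ω₁ + ω̂₁ + ω₂` with `ω̂₁ = Σᵢ cᵢ·(D·dᵢ − sdᵢ·D)`. -/
theorem semigroup_action_is_fluctuation {R : Type*} [Ring R] (D : R) (n m : ℕ)
    (a b sb : Fin n → R) (c d sd : Fin m → R)
    (hab : (∑ j, a j * sb j) = 1) (hcd : (∑ i, c i * sd i) = 1) :
    ∑ i, ∑ j, a j * c i * D * d i * b j =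
      D + (∑ j, a j * (D * b j - sb j * D)) + (∑ i, c i * (D * d i - sd i * D)) +
        ∑ j, a j * ((∑ i, c i * (D * d i - sd i * D)) * b j
          - sb j * (∑ i, c i * (D * d i - sd i * D))) := by
  set Ω := ∑ i, c i * (D * d i - sd i * D) with hΩdef
  have hΩ : ∑ i, c i * D * d i = D + Ω := by
    rw [hΩdef]
    simp only [mul_sub, Finset.sum_sub_distrib, ← mul_assoc]
    rw [← Finset.sum_mul, hcd, one_mul]
    abel
  have hL : ∑ i, ∑ j, a j * c i * D * d i * b j = ∑ j, a j * (D + Ω) * b j := by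
    rw [Finset.sum_comm]
    refine Finset.sum_congr rfl fun j _ => ?_
    rw [← hΩ, Finset.mul_sum, Finset.sum_mul]
    refine Finset.sum_congr rfl fun i _ => by noncomm_ring
  rw [hL]
  have h1 : ∑ j, a j * sb j * D = D := by rw [← Finset.sum_mul, hab, one_mul]
  have h2 : ∑ j, a j * sb j * Ω = Ω := by rw [← Finset.sum_mul, hab, one_mul]
  simp only [mul_sub, Finset.sum_sub_distrib, ← mul_assoc, h1, h2, mul_add, add_mul,
    Finset.sum_add_distrib]
  abel
end

section
/- Let m° : Aᵐᵒᵖ ⊗[ℂ] A → Aᵐᵒᵖ be the unique ℂ-linear map with m°(op(a) ⊗ b) = op(a)·op(σ⁻¹(b)) = op(σ⁻¹(b)·a). Then the set Pert(Aᵐᵒᵖ, σ°) := { x ∈ Aᵐᵒᵖ ⊗[ℂ] A : m°(x) = op(1) } is a submonoid of Aᵐᵒᵖ ⊗[ℂ] A: it contains op(1) ⊗ 1 and is closed under the tensor-product multiplication (op(a) ⊗ b)·(op(a') ⊗ b') = op(a'·a) ⊗ b·b'. -/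
open scoped TensorProduct

/-- The unique `ℂ`-linear map `m° : Aᵐᵒᵖ ⊗[ℂ] A → Aᵐᵒᵖ` with
`m°(op a ⊗ b) = op a · op(σ⁻¹ b) = op (σ⁻¹(b)·a)`. -/
noncomputable def oppTwistedNormMap {A : Type*} [Ring A] [Algebra ℂ A] (σ : A ≃ₐ[ℂ] A) :
    Aᵐᵒᵖ ⊗[ℂ] A →ₗ[ℂ] Aᵐᵒᵖ :=
  (LinearMap.mul' ℂ Aᵐᵒᵖ).comp
    (TensorProduct.map LinearMap.id
      ((MulOpposite.opLinearEquiv ℂ).toLinearMap.comp σ.symm.toLinearMap))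

lemma oppTwistedNormMap_tmul {A : Type*} [Ring A] [Algebra ℂ A] (σ : A ≃ₐ[ℂ] A)
    (z : Aᵐᵒᵖ) (b : A) :
    oppTwistedNormMap σ (z ⊗ₜ[ℂ] b) = z * MulOpposite.op (σ.symm b) := by
  simp [oppTwistedNormMap]

lemma oppTwistedNormMap_step {A : Type*} [Ring A] [Algebra ℂ A] (σ : A ≃ₐ[ℂ] A)
    (z : Aᵐᵒᵖ) (b : A) (y : Aᵐᵒᵖ ⊗[ℂ] A) :
    oppTwistedNormMap σ ((z ⊗ₜ[ℂ] b) * y) =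
      z * oppTwistedNormMap σ y * MulOpposite.op (σ.symm b) := by
  induction y using TensorProduct.induction_on with
  | zero => simp
  | tmul w b' =>
      rw [Algebra.TensorProduct.tmul_mul_tmul, oppTwistedNormMap_tmul,
        oppTwistedNormMap_tmul, map_mul, MulOpposite.op_mul]
      noncomm_ring
  | add y₁ y₂ h₁ h₂ => simp [mul_add, h₁, h₂, add_mul]

lemma oppTwistedNormMap_mul_right {A : Type*} [Ring A] [Algebra ℂ A] (σ : A ≃ₐ[ℂ] A)
    (y : Aᵐᵒᵖ ⊗[ℂ] A) (hy : oppTwistedNormMap σ y = MulOpposite.op 1)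
    (x : Aᵐᵒᵖ ⊗[ℂ] A) :
    oppTwistedNormMap σ (x * y) = oppTwistedNormMap σ x := by
  induction x using TensorProduct.induction_on with
  | zero => simp
  | tmul z b => rw [oppTwistedNormMap_step, hy, oppTwistedNormMap_tmul]; simp
  | add x₁ x₂ h₁ h₂ => simp [add_mul, h₁, h₂]

/-- the set `Pert(Aᵐᵒᵖ,σ°) = {x ∈ Aᵐᵒᵖ ⊗ A : m°(x) = op 1}` contains
`op 1 ⊗ 1` and is closed under the tensor-product multiplication, i.e. it is a submonoid. -/
theorem opp_pert_is_submonoid {A : Type*} [Ring A] [Algebra ℂ A] (σ : A ≃ₐ[ℂ] A) :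
    (∀ a b : A, oppTwistedNormMap σ (MulOpposite.op a ⊗ₜ[ℂ] b) =
        MulOpposite.op (σ.symm b * a)) ∧
    oppTwistedNormMap σ (MulOpposite.op (1 : A) ⊗ₜ[ℂ] (1 : A)) = MulOpposite.op 1 ∧
    ∀ x y : Aᵐᵒᵖ ⊗[ℂ] A,
      oppTwistedNormMap σ x = MulOpposite.op 1 → oppTwistedNormMap σ y = MulOpposite.op 1 →
      oppTwistedNormMap σ (x * y) = MulOpposite.op 1 := by
  refine ⟨fun a b => ?_, ?_, fun x y hx hy => ?_⟩
  · rw [oppTwistedNormMap_tmul]; simp [MulOpposite.op_mul]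
  · simp [oppTwistedNormMap_tmul]
  · rw [oppTwistedNormMap_mul_right σ y hy x, hx]
end

section
/- For every finite family (𝐚ⱼ, 𝐛ⱼ)ⱼ of elements of B = A_ev ⊕ A_ev there exist six complex numbers φ, φ', σ₁, σ₂, σ¹, σ² such that the twisted-fluctuated operator D_ω := D + ω₁ + ω̂₁ + ω₂ has matrix components: (D_ω)_{αI}^{βJ} = (δ_α¹δ²^β·k_x·(1+φ) + δ_α²δ₁^β·conj(k_x)·(1+φ'))·δ_I^J on the particle–particle block; (D_ω)_{α'I'}^{β'J'} = (δ_{α'}¹δ₂^{β'}·conj(k_x)·(1+conj(φ)) + δ_{α'}²δ₁^{β'}·k_x·(1+conj(φ')))·δ_{I'}^{J'} on the antiparticle–antiparticle block; (D_ω)_{α'I'}^{βJ} = k_y·δ_{α'}¹δ₁^β·(σ_{I'} + δ_{I'}¹)·(conj(σ^J) + δ₁^J); and (D_ω)_{αI}^{β'J'} = conj(k_y)·δ_α¹δ₁^{β'}·(conj(σ_I) + δ_I¹)·(σ^{J'} + δ₁^{J'}), where σ_I ∈ {σ₁, σ₂} and σ^J ∈ {σ¹, σ²} according to the index. -/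
/-- Index set of `H = ℂ⁸`: the particle sector `(α, I)` and the antiparticle
sector `(α', I')`, each in `{1,2}×{1,2}` (coded as `Fin 2 × Fin 2`). -/
abbrev ModelIdx := (Fin 2 × Fin 2) ⊕ (Fin 2 × Fin 2)

/-- `A_ev = ℂ ⊕ ℂ ⊕ M₂(ℂ)`. -/
abbrev Aev := ℂ × ℂ × Matrix (Fin 2) (Fin 2) ℂ

/-- `B = A_ev ⊕ A_ev`. -/
abbrev Bev := Aev × Aev

/-- The Dirac operator of the `U(1)×U(2)` model, as a matrix on `ℂ⁸`. -/
noncomputable def modelD (kx ky : ℂ) : Matrix ModelIdx ModelIdx ℂ :=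
  Matrix.of fun p q =>
    match p, q with
    | Sum.inl (α, i), Sum.inl (β, j) =>
        (kx * (if α = 0 then 1 else 0) * (if β = 1 then 1 else 0)
          + (starRingEnd ℂ) kx * (if α = 1 then 1 else 0) * (if β = 0 then 1 else 0))
          * (if i = j then 1 else 0)
    | Sum.inr (α', i'), Sum.inr (β', j') =>
        ((starRingEnd ℂ) kx * (if α' = 0 then 1 else 0) * (if β' = 1 then 1 else 0)
          + kx * (if α' = 1 then 1 else 0) * (if β' = 0 then 1 else 0))
          * (if i' = j' then 1 else 0)
    | Sum.inr (α', i'), Sum.inl (β, j) =>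
        ky * (if α' = 0 then 1 else 0) * (if β = 0 then 1 else 0)
          * (if i' = 0 then 1 else 0) * (if j = 0 then 1 else 0)
    | Sum.inl (α, i), Sum.inr (β', j') =>
        (starRingEnd ℂ) ky * (if α = 0 then 1 else 0) * (if β' = 0 then 1 else 0)
          * (if i = 0 then 1 else 0) * (if j' = 0 then 1 else 0)

/-- The representation `π` of `B = A_ev ⊕ A_ev` on `ℂ⁸`: on the particle sector the
diagonal action `(λ_R^r, λ_L^l)` (identity on `I`), on the antiparticle sector `m^l`
for `α' = 1` and `m^r` for `α' = 2`. Here `a = ((λ_R^r, λ_L^r, m^r), (λ_R^l, λ_L^l, m^l))`. -/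
noncomputable def modelPi (a : Bev) : Matrix ModelIdx ModelIdx ℂ :=
  Matrix.of fun p q =>
    match p, q with
    | Sum.inl (α, i), Sum.inl (β, j) =>
        if α = β ∧ i = j then (if α = 0 then a.1.1 else a.2.2.1) else 0
    | Sum.inr (α', i'), Sum.inr (β', j') =>
        if α' = β' then (if α' = 0 then a.2.2.2 i' j' else a.1.2.2 i' j') else 0
    | _, _ => 0

/-- The flip automorphism `σ((aʳ, aˡ)) = (aˡ, aʳ)` of `B`. -/
def modelFlip (a : Bev) : Bev := (a.2, a.1)

/-- The exchange of the two sectors of `ℂ⁸`. -/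
def swapIdx : ModelIdx → ModelIdx
  | Sum.inl x => Sum.inr x
  | Sum.inr x => Sum.inl x

/-- Conjugation `M ↦ J∘M∘J⁻¹` by the real structure `J` (sector exchange composed with
componentwise complex conjugation, `J² = 1`), at the level of matrices:
`(J M J⁻¹)ₚ,q = conj (M_{swap p, swap q})`. Applied to `modelPi a` it gives the hat `â`. -/
noncomputable def modelHat (M : Matrix ModelIdx ModelIdx ℂ) : Matrix ModelIdx ModelIdx ℂ :=
  Matrix.of fun p q => (starRingEnd ℂ) (M (swapIdx p) (swapIdx q))

noncomputable def fluc (kx ky f g h w : ℂ) (L U : Matrix (Fin 2) (Fin 2) ℂ) :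
    Matrix ModelIdx ModelIdx ℂ :=
  Matrix.of fun p q =>
    match p, q with
    | Sum.inl (α, i), Sum.inl (β, j) =>
        (kx * f * (if α = 0 then 1 else 0) * (if β = 1 then 1 else 0)
          + (starRingEnd ℂ) kx * g * (if α = 1 then 1 else 0) * (if β = 0 then 1 else 0))
          * (if i = j then 1 else 0)
    | Sum.inr (α', i'), Sum.inr (β', j') =>
        ((starRingEnd ℂ) kx * h * (if α' = 0 then 1 else 0) * (if β' = 1 then 1 else 0)
          + kx * w * (if α' = 1 then 1 else 0) * (if β' = 0 then 1 else 0))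
          * (if i' = j' then 1 else 0)
    | Sum.inr (α', i'), Sum.inl (β, j) =>
        ky * (if α' = 0 then 1 else 0) * (if β = 0 then 1 else 0) * L i' j
    | Sum.inl (α, i), Sum.inr (β', j') =>
        (starRingEnd ℂ) ky * (if α = 0 then 1 else 0) * (if β' = 0 then 1 else 0) * U i j'

noncomputable def E00 : Matrix (Fin 2) (Fin 2) ℂ := !![1,0;0,0]
noncomputable def uu (a b : Bev) : ℂ := a.1.1 * (b.2.2.1 - b.2.1)
noncomputable def vv (a b : Bev) : ℂ := a.2.2.1 * (b.1.1 - b.1.2.1)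
noncomputable def Smat (a b : Bev) : Matrix (Fin 2) (Fin 2) ℂ :=
  Matrix.of fun i k => a.2.2.2 i k * b.1.1
    - (a.2.2.2 i 0 * b.1.2.2 0 k + a.2.2.2 i 1 * b.1.2.2 1 k)
noncomputable def Tmat (a b : Bev) : Matrix (Fin 2) (Fin 2) ℂ :=
  Matrix.of fun k j => a.1.1 * (b.2.2.2 k j - (if k = j then b.2.1 else 0))

lemma hD (kx ky : ℂ) : modelD kx ky = fluc kx ky 1 1 1 1 E00 E00 := by
  ext p q
  rcases p with ⟨α, i⟩ | ⟨α, i⟩ <;> rcases q with ⟨β, j⟩ | ⟨β, j⟩ <;>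
    simp only [modelD, fluc, E00, Matrix.of_apply, mul_one] <;>
    fin_cases α <;> fin_cases β <;> fin_cases i <;> fin_cases j <;>
    norm_num [Matrix.cons_val_zero, Matrix.cons_val_one, Matrix.head_cons]

set_option maxHeartbeats 2000000 in
lemma hT1 (kx ky : ℂ) (a b : Bev) :
    modelPi a * (modelD kx ky * modelPi b - modelPi (modelFlip b) * modelD kx ky) =
      fluc kx ky (uu a b) (vv a b) 0 0 (Smat a b * E00) (E00 * Tmat a b) := by
  ext p q
  rcases p with ⟨α, i⟩ | ⟨α, i⟩ <;> rcases q with ⟨β, j⟩ | ⟨β, j⟩ <;>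
    simp only [Matrix.mul_apply, Matrix.sub_apply, Fintype.sum_sum_type,
      Fintype.sum_prod_type, Fin.sum_univ_two, modelD, modelPi, modelFlip, fluc, E00,
      uu, vv, Smat, Tmat, Matrix.of_apply] <;>
    fin_cases α <;> fin_cases β <;> fin_cases i <;> fin_cases j <;>
    norm_num [Matrix.cons_val_zero, Matrix.cons_val_one, Matrix.head_cons] <;> ring

set_option maxHeartbeats 2000000 in
lemma hT1h (kx ky : ℂ) (a b : Bev) :
    modelHat (modelPi a) * (modelD kx ky * modelHat (modelPi b)
        - modelHat (modelPi (modelFlip b)) * modelD kx ky) =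
      fluc kx ky 0 0 ((starRingEnd ℂ) (uu a b)) ((starRingEnd ℂ) (vv a b))
        (E00 * (Tmat a b).map (starRingEnd ℂ)) ((Smat a b).map (starRingEnd ℂ) * E00) := by
  ext p q
  rcases p with ⟨α, i⟩ | ⟨α, i⟩ <;> rcases q with ⟨β, j⟩ | ⟨β, j⟩ <;>
    simp only [Matrix.mul_apply, Matrix.sub_apply, Fintype.sum_sum_type,
      Fintype.sum_prod_type, Fin.sum_univ_two, modelD, modelPi, modelFlip, modelHat,
      swapIdx, fluc, E00, uu, vv, Smat, Tmat, Matrix.of_apply, Matrix.map_apply] <;>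
    fin_cases α <;> fin_cases β <;> fin_cases i <;> fin_cases j <;>
    norm_num [Matrix.cons_val_zero, Matrix.cons_val_one, Matrix.head_cons,
      map_mul, map_sub, map_add] <;> ring

set_option maxHeartbeats 2000000 in
lemma hT2 (kx ky f g h w : ℂ) (L U : Matrix (Fin 2) (Fin 2) ℂ) (a b : Bev) :
    modelHat (modelPi a) * (fluc kx ky f g h w L U * modelHat (modelPi b)
        - modelHat (modelPi (modelFlip b)) * fluc kx ky f g h w L U) =
      fluc kx ky 0 0 (h * (starRingEnd ℂ) (uu a b)) (w * (starRingEnd ℂ) (vv a b))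
        (L * (Tmat a b).map (starRingEnd ℂ)) ((Smat a b).map (starRingEnd ℂ) * U) := by
  ext p q
  rcases p with ⟨α, i⟩ | ⟨α, i⟩ <;> rcases q with ⟨β, j⟩ | ⟨β, j⟩ <;>
    simp only [Matrix.mul_apply, Matrix.sub_apply, Fintype.sum_sum_type,
      Fintype.sum_prod_type, Fin.sum_univ_two, modelPi, modelFlip, modelHat,
      swapIdx, fluc, E00, uu, vv, Smat, Tmat, Matrix.of_apply, Matrix.map_apply] <;>
    fin_cases α <;> fin_cases β <;> fin_cases i <;> fin_cases j <;>
    norm_num [Matrix.cons_val_zero, Matrix.cons_val_one, Matrix.head_cons,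
      map_mul, map_sub, map_add] <;> ring

lemma fluc_sum {N : ℕ} (kx ky : ℂ) (f g h w : Fin N → ℂ)
    (L U : Fin N → Matrix (Fin 2) (Fin 2) ℂ) :
    ∑ j, fluc kx ky (f j) (g j) (h j) (w j) (L j) (U j) =
      fluc kx ky (∑ j, f j) (∑ j, g j) (∑ j, h j) (∑ j, w j) (∑ j, L j) (∑ j, U j) := by
  ext p q
  rcases p with ⟨α, i⟩ | ⟨α, i⟩ <;> rcases q with ⟨β, j⟩ | ⟨β, j⟩ <;>
    simp only [Matrix.sum_apply, fluc, Matrix.of_apply, Finset.mul_sum, Finset.sum_mul,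
      ← Finset.sum_add_distrib] <;>
    exact Finset.sum_congr rfl fun x _ => by ring

lemma fluc_add (kx ky f1 g1 h1 w1 f2 g2 h2 w2 : ℂ)
    (L1 U1 L2 U2 : Matrix (Fin 2) (Fin 2) ℂ) :
    fluc kx ky f1 g1 h1 w1 L1 U1 + fluc kx ky f2 g2 h2 w2 L2 U2 =
      fluc kx ky (f1 + f2) (g1 + g2) (h1 + h2) (w1 + w2) (L1 + L2) (U1 + U2) := by
  ext p q
  rcases p with ⟨α, i⟩ | ⟨α, i⟩ <;> rcases q with ⟨β, j⟩ | ⟨β, j⟩ <;>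
    simp only [Matrix.add_apply, fluc, Matrix.of_apply] <;> ring

set_option maxHeartbeats 1000000 in
/-- for every finite family `(𝐚ⱼ, 𝐛ⱼ)` in `B = A_ev ⊕ A_ev`, there exist six
complex parameters `φ, φ', σ₁, σ₂, σ¹, σ²` expressing all matrix components of the
twisted-fluctuated operator `D_ω = D + ω₁ + ω̂₁ + ω₂` of the `U(1)×U(2)` model. -/
theorem twisted_U1xU2_fluctuation (kx ky : ℂ) (N : ℕ) (a b : Fin N → Bev) :
    ∃ φ φ' σ₁ σ₂ σ'₁ σ'₂ : ℂ,
      let D := modelD kx ky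
      let hat := fun x : Bev => modelHat (modelPi x)
      let ω₁ := ∑ j, modelPi (a j) * (D * modelPi (b j) - modelPi (modelFlip (b j)) * D)
      let ωhat₁ := ∑ j, hat (a j) * (D * hat (b j) - hat (modelFlip (b j)) * D)
      let ω₂ := ∑ j, hat (a j) * (ω₁ * hat (b j) - hat (modelFlip (b j)) * ω₁)
      let Dω := D + ω₁ + ωhat₁ + ω₂
      let sLow : Fin 2 → ℂ := ![σ₁, σ₂]
      let sUp : Fin 2 → ℂ := ![σ'₁, σ'₂]
      (∀ α i β j : Fin 2, Dω (Sum.inl (α, i)) (Sum.inl (β, j)) =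
        (kx * (1 + φ) * (if α = 0 then 1 else 0) * (if β = 1 then 1 else 0)
          + (starRingEnd ℂ) kx * (1 + φ') * (if α = 1 then 1 else 0)
            * (if β = 0 then 1 else 0)) * (if i = j then 1 else 0)) ∧
      (∀ α' i' β' j' : Fin 2, Dω (Sum.inr (α', i')) (Sum.inr (β', j')) =
        ((starRingEnd ℂ) kx * (1 + (starRingEnd ℂ) φ) * (if α' = 0 then 1 else 0)
            * (if β' = 1 then 1 else 0)
          + kx * (1 + (starRingEnd ℂ) φ') * (if α' = 1 then 1 else 0)
            * (if β' = 0 then 1 else 0)) * (if i' = j' then 1 else 0)) ∧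
      (∀ α' i' β j : Fin 2, Dω (Sum.inr (α', i')) (Sum.inl (β, j)) =
        ky * (if α' = 0 then 1 else 0) * (if β = 0 then 1 else 0)
          * (sLow i' + (if i' = 0 then 1 else 0))
          * ((starRingEnd ℂ) (sUp j) + (if j = 0 then 1 else 0))) ∧
      (∀ α i β' j' : Fin 2, Dω (Sum.inl (α, i)) (Sum.inr (β', j')) =
        (starRingEnd ℂ) ky * (if α = 0 then 1 else 0) * (if β' = 0 then 1 else 0)
          * ((starRingEnd ℂ) (sLow i) + (if i = 0 then 1 else 0))
          * (sUp j' + (if j' = 0 then 1 else 0))) := by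
  classical
  set φ : ℂ := ∑ j, uu (a j) (b j) with hφ
  set φ' : ℂ := ∑ j, vv (a j) (b j) with hφ'
  set SS : Matrix (Fin 2) (Fin 2) ℂ := ∑ j, Smat (a j) (b j) with hSS
  set TT : Matrix (Fin 2) (Fin 2) ℂ := ∑ j, Tmat (a j) (b j) with hTT
  refine ⟨φ, φ', SS 0 0, SS 1 0, TT 0 0, TT 0 1, ?_⟩
  intro D hat ω₁ ωhat₁ ω₂ Dω sLow sUp
  have hSc : ∑ j, (Smat (a j) (b j)).map (starRingEnd ℂ) = SS.map (starRingEnd ℂ) := by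
    ext i k; simp [Matrix.map_apply, Matrix.sum_apply, hSS, map_sum]
  have hTc : ∑ j, (Tmat (a j) (b j)).map (starRingEnd ℂ) = TT.map (starRingEnd ℂ) := by
    ext i k; simp [Matrix.map_apply, Matrix.sum_apply, hTT, map_sum]
  have hω₁ : ω₁ = fluc kx ky φ φ' 0 0 (SS * E00) (E00 * TT) := by
    show (∑ j, modelPi (a j) * (modelD kx ky * modelPi (b j)
        - modelPi (modelFlip (b j)) * modelD kx ky)) = _
    rw [Finset.sum_congr rfl fun j _ => hT1 kx ky (a j) (b j), fluc_sum,
      ← Finset.sum_mul, ← Finset.mul_sum]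
    simp
    rfl
  have hω₁h : ωhat₁ = fluc kx ky 0 0 ((starRingEnd ℂ) φ) ((starRingEnd ℂ) φ')
      (E00 * TT.map (starRingEnd ℂ)) (SS.map (starRingEnd ℂ) * E00) := by
    show (∑ j, modelHat (modelPi (a j)) * (modelD kx ky * modelHat (modelPi (b j))
        - modelHat (modelPi (modelFlip (b j))) * modelD kx ky)) = _
    rw [Finset.sum_congr rfl fun j _ => hT1h kx ky (a j) (b j), fluc_sum,
      ← Finset.mul_sum, ← Finset.sum_mul, hSc, hTc]
    simp [hφ, hφ', map_sum]
  have hω₂ : ω₂ = fluc kx ky 0 0 0 0 (SS * E00 * TT.map (starRingEnd ℂ))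
      (SS.map (starRingEnd ℂ) * (E00 * TT)) := by
    show (∑ j, modelHat (modelPi (a j)) * (ω₁ * modelHat (modelPi (b j))
        - modelHat (modelPi (modelFlip (b j))) * ω₁)) = _
    have h1 : ∀ j : Fin N, modelHat (modelPi (a j)) * (ω₁ * modelHat (modelPi (b j))
        - modelHat (modelPi (modelFlip (b j))) * ω₁) =
        fluc kx ky 0 0 (0 * (starRingEnd ℂ) (uu (a j) (b j)))
          (0 * (starRingEnd ℂ) (vv (a j) (b j)))
          ((SS * E00) * (Tmat (a j) (b j)).map (starRingEnd ℂ))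
          ((Smat (a j) (b j)).map (starRingEnd ℂ) * (E00 * TT)) := by
      intro j
      rw [hω₁]
      exact hT2 kx ky φ φ' 0 0 _ _ (a j) (b j)
    rw [Finset.sum_congr rfl fun j _ => h1 j, fluc_sum]
    simp only [zero_mul, Finset.sum_const_zero, ← Finset.mul_sum, ← Finset.sum_mul,
      hSc, hTc]
  have hDω : Dω = fluc kx ky (1 + φ) (1 + φ') (1 + (starRingEnd ℂ) φ)
      (1 + (starRingEnd ℂ) φ')
      (E00 + SS * E00 + E00 * TT.map (starRingEnd ℂ) + SS * E00 * TT.map (starRingEnd ℂ))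
      (E00 + E00 * TT + SS.map (starRingEnd ℂ) * E00
        + SS.map (starRingEnd ℂ) * (E00 * TT)) := by
    show D + ω₁ + ωhat₁ + ω₂ = _
    rw [show D = modelD kx ky from rfl, hD kx ky, hω₁, hω₁h, hω₂,
      fluc_add, fluc_add, fluc_add]
    norm_num
  refine ⟨?_, ?_, ?_, ?_⟩
  · intro α i β j
    rw [hDω]
    simp only [fluc, Matrix.of_apply]
  · intro α i β j
    rw [hDω]
    simp only [fluc, Matrix.of_apply]
  · intro α' i' β j
    rw [hDω]
    simp only [fluc, Matrix.of_apply, Matrix.add_apply, Matrix.mul_apply,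
      Matrix.map_apply, Fin.sum_univ_two, E00]
    have hsU : sUp = ![TT 0 0, TT 0 1] := rfl
    have hsL : sLow = ![SS 0 0, SS 1 0] := rfl
    fin_cases i' <;> fin_cases j <;>
      norm_num [hsU, hsL, Matrix.cons_val_zero, Matrix.cons_val_one, Matrix.head_cons] <;> ring
  · intro α i β' j'
    rw [hDω]
    simp only [fluc, Matrix.of_apply, Matrix.add_apply, Matrix.mul_apply,
      Matrix.map_apply, Fin.sum_univ_two, E00]
    have hsU : sUp = ![TT 0 0, TT 0 1] := rfl
    have hsL : sLow = ![SS 0 0, SS 1 0] := rfl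
    fin_cases i <;> fin_cases j' <;>
      norm_num [hsU, hsL, Matrix.cons_val_zero, Matrix.cons_val_one, Matrix.head_cons] <;> ring
end
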